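/- For every positive natural number n, the central binomial coefficient satisfies (4^n/√(π n))·(1 − 1/(6n)) ≤ C(2n, n) ≤ 4^n/√(π n). -/

import Mathlib

open Real Filter Stirling Topology

namespace CentralBinomAux

lemma aux1 (x : ℝ) (hx0 : 0 ≤ x) :
    (1:ℝ)/3 * (((1 : ℝ) / (2 * (x + 1) + 1)) ^ 2 / (1 - ((1 : ℝ) / (2 * (x + 1) + 1)) ^ 2)) =
      1 / (12 * (x + 1)) - 1 / (12 * (x + 2)) := by
  have h23 : (2 * (x + 1) + 1) ≠ 0 := by positivity
  have h1u : (1:ℝ) - (1 / (2 * (x + 1) + 1)) ^ 2 = (4*x^2+12*x+8) / (2 * (x + 1) + 1)^2 := by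
    field_simp; ring
  have hd : (4*x^2+12*x+8 : ℝ) ≠ 0 := by positivity
  rw [h1u]
  field_simp
  ring

lemma aux2 (x : ℝ) (hx0 : 0 ≤ x) :
    ((1 : ℝ) / (2 * (x + 1) + 1)) ^ 2 / 3 * (1 - ((1 : ℝ) / (2 * (x + 1) + 1)) ^ 2 / 3)⁻¹ =
      1 / (12 * x ^ 2 + 36 * x + 26) := by
  have h23 : (2 * (x + 1) + 1) ≠ 0 := by positivity
  have h1u : (1:ℝ) - (1 / (2 * (x + 1) + 1)) ^ 2 / 3 = (12*x^2+36*x+26) / (3*(2 * (x + 1) + 1)^2) := by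
    field_simp; ring
  have hd : (12*x^2+36*x+26 : ℝ) ≠ 0 := by positivity
  rw [h1u]
  field_simp

/-- Upper bound on the Stirling log-difference. -/
lemma diff_le (m : ℕ) :
    Real.log (stirlingSeq (m + 1)) - Real.log (stirlingSeq (m + 2)) ≤
      1 / (12 * ((m : ℝ) + 1)) - 1 / (12 * ((m : ℝ) + 2)) := by
  have hx0 : (0 : ℝ) ≤ (m : ℝ) := Nat.cast_nonneg m
  set u : ℝ := ((1 : ℝ) / (2 * ((m : ℝ) + 1) + 1)) ^ 2 with hu
  have hu0 : 0 ≤ u := sq_nonneg _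
  have hu1 : u < 1 := by
    rw [hu, div_pow, one_pow, div_lt_one (by positivity)]
    nlinarith
  have g : HasSum (fun k : ℕ => (1 / 3 : ℝ) * u ^ (k + 1)) (1 / 3 * (u / (1 - u))) := by
    have h := (hasSum_geometric_of_lt_one hu0 hu1).mul_left (1 / 3 * u)
    have he : (fun k : ℕ => 1 / 3 * u * u ^ k) = fun k : ℕ => (1 / 3 : ℝ) * u ^ (k + 1) := by
      funext k; ring
    rw [he] at h
    rw [div_eq_mul_inv u, ← mul_assoc]; exact h
  have hab : ∀ k : ℕ, (1 : ℝ) / (2 * ((k + 1 : ℕ) : ℝ) + 1) * ((1 / (2 * ((m + 1 : ℕ) : ℝ) + 1)) ^ 2) ^ (k + 1)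
      ≤ (1 / 3 : ℝ) * u ^ (k + 1) := by
    intro k
    have hcast : ((1 : ℝ) / (2 * ((m + 1 : ℕ) : ℝ) + 1)) ^ 2 = u := by
      rw [hu]; push_cast; ring_nf
    rw [hcast]
    apply mul_le_mul_of_nonneg_right _ (pow_nonneg hu0 _)
    rw [div_le_div_iff₀ (by positivity) (by norm_num)]
    push_cast
    linarith [Nat.cast_nonneg (α := ℝ) k]
  have hsum := hasSum_le hab (log_stirlingSeq_diff_hasSum m) g
  refine hsum.trans (le_of_eq ?_)
  rw [hu]
  exact aux1 (m : ℝ) hx0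

/-- Lower bound on the Stirling log-difference. -/
lemma diff_ge (m : ℕ) :
    1 / (12 * ((m : ℝ) + 1) + 1) - 1 / (12 * ((m : ℝ) + 2) + 1) ≤
      Real.log (stirlingSeq (m + 1)) - Real.log (stirlingSeq (m + 2)) := by
  have hx0 : (0 : ℝ) ≤ (m : ℝ) := Nat.cast_nonneg m
  set u : ℝ := ((1 : ℝ) / (2 * ((m : ℝ) + 1) + 1)) ^ 2 with hu
  have hu0 : 0 ≤ u := sq_nonneg _
  have hu1 : u < 1 := by
    rw [hu, div_pow, one_pow, div_lt_one (by positivity)]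
    nlinarith
  have hu31 : u / 3 < 1 := by linarith
  have hu30 : 0 ≤ u / 3 := by linarith
  have g : HasSum (fun k : ℕ => (u / 3) ^ (k + 1)) ((u / 3) * (1 - u / 3)⁻¹) := by
    have h := (hasSum_geometric_of_lt_one hu30 hu31).mul_left (u / 3)
    have he : (fun k : ℕ => u / 3 * (u / 3) ^ k) = fun k : ℕ => (u / 3) ^ (k + 1) := by
      funext k; ring
    rwa [he] at h
  have hnat : ∀ k : ℕ, 2 * (k + 1) + 1 ≤ 3 ^ (k + 1) := by
    intro k
    induction k with
    | zero => norm_num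
    | succ k ih => rw [pow_succ]; omega
  have hab : ∀ k : ℕ, (u / 3) ^ (k + 1) ≤
      (1 : ℝ) / (2 * ((k + 1 : ℕ) : ℝ) + 1) * ((1 / (2 * ((m + 1 : ℕ) : ℝ) + 1)) ^ 2) ^ (k + 1) := by
    intro k
    have hcast : ((1 : ℝ) / (2 * ((m + 1 : ℕ) : ℝ) + 1)) ^ 2 = u := by
      rw [hu]; push_cast; ring_nf
    rw [hcast]
    have h3 : ((1 : ℝ) / 3) ^ (k + 1) ≤ 1 / (2 * ((k + 1 : ℕ) : ℝ) + 1) := by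
      rw [div_pow, one_pow]
      have hc : ((2 * (k + 1) + 1 : ℕ) : ℝ) ≤ ((3 ^ (k + 1) : ℕ) : ℝ) := Nat.cast_le.2 (hnat k)
      push_cast at hc
      rw [div_le_div_iff₀ (by positivity) (by positivity)]
      push_cast
      nlinarith
    calc (u / 3) ^ (k + 1) = (1 / 3 : ℝ) ^ (k + 1) * u ^ (k + 1) := by
          rw [← mul_pow]; ring_nf
      _ ≤ 1 / (2 * ((k + 1 : ℕ) : ℝ) + 1) * u ^ (k + 1) :=
          mul_le_mul_of_nonneg_right h3 (pow_nonneg hu0 _)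
  have hsum := hasSum_le hab g (log_stirlingSeq_diff_hasSum m)
  refine le_trans ?_ hsum
  have hval : (u / 3) * (1 - u / 3)⁻¹ = 1 / (12 * (m : ℝ) ^ 2 + 36 * (m : ℝ) + 26) := by
    rw [hu]; exact aux2 (m : ℝ) hx0
  rw [hval]
  rw [div_sub_div _ _ (by positivity) (by positivity),
    div_le_div_iff₀ (by positivity) (by positivity)]
  nlinarith

lemma tendsto_log_stirling :
    Tendsto (fun k : ℕ => Real.log (stirlingSeq (k + 1))) atTop (𝓝 (Real.log (Real.sqrt π))) := by
  have h1 : Tendsto (fun k : ℕ => stirlingSeq (k + 1)) atTop (𝓝 (Real.sqrt π)) :=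
    tendsto_stirlingSeq_sqrt_pi.comp (tendsto_add_atTop_nat 1)
  exact h1.log (Real.sqrt_pos.2 pi_pos).ne'

lemma tendsto_shift (c : ℝ) :
    Tendsto (fun k : ℕ => 1 / (12 * ((k : ℝ) + 1) + c)) atTop (𝓝 0) := by
  simp only [one_div]
  have h1 : Tendsto (fun k : ℕ => (k : ℝ) + 1) atTop atTop :=
    tendsto_atTop_add_const_right _ 1 tendsto_natCast_atTop_atTop
  have h2 : Tendsto (fun k : ℕ => 12 * ((k : ℝ) + 1)) atTop atTop :=
    h1.const_mul_atTop (by norm_num)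
  have h3 := tendsto_atTop_add_const_right _ c h2
  exact tendsto_inv_atTop_zero.comp h3

lemma log_upper (m : ℕ) :
    Real.log (stirlingSeq (m + 1)) ≤ Real.log (Real.sqrt π) + 1 / (12 * ((m : ℝ) + 1)) := by
  have hmono : Monotone (fun k : ℕ => Real.log (stirlingSeq (k + 1)) - 1 / (12 * ((k : ℝ) + 1))) := by
    apply monotone_nat_of_le_succ
    intro k
    have h := diff_le k
    push_cast
    ring_nf
    ring_nf at h
    linarith
  have h0 : Tendsto (fun k : ℕ => 1 / (12 * ((k : ℝ) + 1))) atTop (𝓝 0) := by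
    have := tendsto_shift 0
    simpa using this
  have htend : Tendsto (fun k : ℕ => Real.log (stirlingSeq (k + 1)) - 1 / (12 * ((k : ℝ) + 1)))
      atTop (𝓝 (Real.log (Real.sqrt π))) := by
    simpa using tendsto_log_stirling.sub h0
  have := hmono.ge_of_tendsto htend m
  linarith

lemma log_lower (m : ℕ) :
    Real.log (Real.sqrt π) + 1 / (12 * ((m : ℝ) + 1) + 1) ≤ Real.log (stirlingSeq (m + 1)) := by
  have hanti : Antitone (fun k : ℕ =>
      Real.log (stirlingSeq (k + 1)) - 1 / (12 * ((k : ℝ) + 1) + 1)) := by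
    apply antitone_nat_of_succ_le
    intro k
    have h := diff_ge k
    push_cast
    ring_nf
    ring_nf at h
    linarith
  have h0 : Tendsto (fun k : ℕ => 1 / (12 * ((k : ℝ) + 1) + 1)) atTop (𝓝 0) := tendsto_shift 1
  have htend : Tendsto (fun k : ℕ => Real.log (stirlingSeq (k + 1)) - 1 / (12 * ((k : ℝ) + 1) + 1))
      atTop (𝓝 (Real.log (Real.sqrt π))) := by
    simpa using tendsto_log_stirling.sub h0
  have := hanti.le_of_tendsto htend m
  linarith

lemma s_le (n : ℕ) (hn : 0 < n) :
    stirlingSeq n ≤ Real.sqrt π * Real.exp (1 / (12 * (n : ℝ))) := by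
  obtain ⟨m, rfl⟩ := Nat.exists_eq_succ_of_ne_zero hn.ne'
  have h := log_upper m
  have hpos := stirlingSeq'_pos m
  have hcast : ((m + 1 : ℕ) : ℝ) = (m : ℝ) + 1 := by push_cast; ring
  calc stirlingSeq (m + 1) = Real.exp (Real.log (stirlingSeq (m + 1))) := (Real.exp_log hpos).symm
    _ ≤ Real.exp (Real.log (Real.sqrt π) + 1 / (12 * ((m : ℝ) + 1))) := Real.exp_le_exp.2 h
    _ = Real.sqrt π * Real.exp (1 / (12 * ((m + 1 : ℕ) : ℝ))) := by
        rw [Real.exp_add, Real.exp_log (Real.sqrt_pos.2 pi_pos), hcast]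

lemma s_ge (n : ℕ) (hn : 0 < n) :
    Real.sqrt π * Real.exp (1 / (12 * (n : ℝ) + 1)) ≤ stirlingSeq n := by
  obtain ⟨m, rfl⟩ := Nat.exists_eq_succ_of_ne_zero hn.ne'
  have h := log_lower m
  have hpos := stirlingSeq'_pos m
  have hcast : ((m + 1 : ℕ) : ℝ) = (m : ℝ) + 1 := by push_cast; ring
  calc Real.sqrt π * Real.exp (1 / (12 * ((m + 1 : ℕ) : ℝ) + 1))
      = Real.exp (Real.log (Real.sqrt π) + 1 / (12 * ((m : ℝ) + 1) + 1)) := by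
        rw [Real.exp_add, Real.exp_log (Real.sqrt_pos.2 pi_pos), hcast]
    _ ≤ Real.exp (Real.log (stirlingSeq (m + 1))) := Real.exp_le_exp.2 h
    _ = stirlingSeq (m + 1) := Real.exp_log hpos

lemma s_pos (m : ℕ) (hm : 0 < m) : 0 < stirlingSeq m := by
  obtain ⟨k, rfl⟩ := Nat.exists_eq_succ_of_ne_zero hm.ne'
  exact stirlingSeq'_pos k

end CentralBinomAux

open CentralBinomAux

theorem centralBinom_bounds (n : ℕ) (hn : 0 < n) :
    (4 : ℝ) ^ n / Real.sqrt (Real.pi * n) * (1 - 1 / (6 * n)) ≤ (Nat.choose (2 * n) n : ℝ) ∧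
    (Nat.choose (2 * n) n : ℝ) ≤ (4 : ℝ) ^ n / Real.sqrt (Real.pi * n) := by
  have hn1 : (1 : ℝ) ≤ (n : ℝ) := by exact_mod_cast hn
  have hnpos : (0 : ℝ) < (n : ℝ) := by linarith
  have h2n : 0 < 2 * n := by omega
  set C : ℝ := (Nat.choose (2 * n) n : ℝ) with hC
  set a : ℝ := stirlingSeq n with haa
  set b : ℝ := stirlingSeq (2 * n) with hbb
  have hapos : 0 < a := s_pos n hn
  have hbpos : 0 < b := s_pos _ h2n
  have hπ : (0 : ℝ) < Real.sqrt π := Real.sqrt_pos.2 pi_pos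
  have hsq : Real.sqrt π * Real.sqrt π = π := Real.mul_self_sqrt pi_pos.le
  have haU : a ≤ Real.sqrt π * Real.exp (1 / (12 * (n : ℝ))) := s_le n hn
  have haL : Real.sqrt π * Real.exp (1 / (12 * (n : ℝ) + 1)) ≤ a := s_ge n hn
  have hbU : b ≤ Real.sqrt π * Real.exp (1 / (12 * ((2 * n : ℕ) : ℝ))) := s_le _ h2n
  have hbL : Real.sqrt π * Real.exp (1 / (12 * ((2 * n : ℕ) : ℝ) + 1)) ≤ b := s_ge _ h2n
  push_cast at hbU hbL
  -- core inequality 1 : √π * b ≤ a ^ 2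
  have hup : Real.sqrt π * b ≤ a ^ 2 := by
    have e1 : (1 : ℝ) / (12 * (2 * (n : ℝ))) ≤ 2 / (12 * (n : ℝ) + 1) := by
      rw [div_le_div_iff₀ (by positivity) (by positivity)]
      nlinarith
    calc Real.sqrt π * b
        ≤ Real.sqrt π * (Real.sqrt π * Real.exp (1 / (12 * (2 * (n : ℝ))))) :=
          mul_le_mul_of_nonneg_left hbU hπ.le
      _ = π * Real.exp (1 / (12 * (2 * (n : ℝ)))) := by rw [← mul_assoc (Real.sqrt π) (Real.sqrt π) _, hsq]
      _ ≤ π * Real.exp (2 / (12 * (n : ℝ) + 1)) :=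
          mul_le_mul_of_nonneg_left (Real.exp_le_exp.2 e1) pi_pos.le
      _ = (Real.sqrt π * Real.exp (1 / (12 * (n : ℝ) + 1))) ^ 2 := by
          rw [mul_pow, Real.sq_sqrt pi_pos.le, pow_two, ← Real.exp_add]
          congr 1
          ring
      _ ≤ a ^ 2 := pow_le_pow_left₀ (by positivity) haL 2
  -- core inequality 2 : (1 - 1/(6n)) * a ^ 2 ≤ √π * b
  have hlow : (1 - 1 / (6 * (n : ℝ))) * a ^ 2 ≤ Real.sqrt π * b := by
    set x : ℝ := 1 / (6 * (n : ℝ)) with hx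
    have hx0 : 0 < x := by positivity
    have hx1 : x ≤ 1 / 6 := by
      rw [hx, div_le_div_iff₀ (by positivity) (by norm_num)]
      nlinarith
    have h1mx : (0 : ℝ) ≤ 1 - x := by linarith
    have hA : a ^ 2 ≤ π * Real.exp x := by
      have hsum : 1 / (12 * (n : ℝ)) + 1 / (12 * (n : ℝ)) = x := by
        rw [hx]; field_simp; ring
      calc a ^ 2 ≤ (Real.sqrt π * Real.exp (1 / (12 * (n : ℝ)))) ^ 2 :=
            pow_le_pow_left₀ hapos.le haU 2
        _ = π * Real.exp (1 / (12 * (n : ℝ)) + 1 / (12 * (n : ℝ))) := by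
            rw [mul_pow, Real.sq_sqrt pi_pos.le, pow_two, ← Real.exp_add]
        _ = π * Real.exp x := by rw [hsum]
    have hB : π ≤ Real.sqrt π * b := by
      calc π = π * 1 := (mul_one π).symm
        _ ≤ π * Real.exp (1 / (12 * (2 * (n : ℝ)) + 1)) :=
            mul_le_mul_of_nonneg_left (Real.one_le_exp (by positivity)) pi_pos.le
        _ = Real.sqrt π * (Real.sqrt π * Real.exp (1 / (12 * (2 * (n : ℝ)) + 1))) := by
            rw [← mul_assoc (Real.sqrt π) (Real.sqrt π) _, hsq]
        _ ≤ Real.sqrt π * b := mul_le_mul_of_nonneg_left hbL hπ.le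
    have hexp : (1 - x) * Real.exp x ≤ 1 := by
      have h := Real.add_one_le_exp (-x)
      calc (1 - x) * Real.exp x ≤ Real.exp (-x) * Real.exp x :=
            mul_le_mul_of_nonneg_right (by linarith) (Real.exp_pos x).le
        _ = 1 := by rw [← Real.exp_add]; simp
    calc (1 - x) * a ^ 2 ≤ (1 - x) * (π * Real.exp x) := mul_le_mul_of_nonneg_left hA h1mx
      _ = π * ((1 - x) * Real.exp x) := by ring
      _ ≤ π * 1 := mul_le_mul_of_nonneg_left hexp pi_pos.le
      _ = π := mul_one π
      _ ≤ Real.sqrt π * b := hB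
  -- the key algebraic identity
  set sn : ℝ := Real.sqrt (n : ℝ) with hsn
  have hsnpos : 0 < sn := Real.sqrt_pos.2 hnpos
  have hsn2 : sn * sn = (n : ℝ) := Real.mul_self_sqrt hnpos.le
  set p : ℝ := ((n : ℝ) / Real.exp 1) ^ n with hp
  have hppos : 0 < p := pow_pos (div_pos hnpos (Real.exp_pos 1)) n
  have hfact : ∀ m : ℕ, 0 < m →
      (m.factorial : ℝ) = stirlingSeq m * (Real.sqrt (2 * (m : ℝ)) * ((m : ℝ) / Real.exp 1) ^ m) := by
    intro m hm
    have hm' : (0 : ℝ) < (m : ℝ) := by exact_mod_cast hm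
    have h1 : 0 < Real.sqrt (2 * (m : ℝ)) := Real.sqrt_pos.2 (by positivity)
    have h2 : (0 : ℝ) < ((m : ℝ) / Real.exp 1) ^ m := pow_pos (div_pos hm' (Real.exp_pos 1)) m
    rw [stirlingSeq, div_mul_cancel₀ _ (mul_pos h1 h2).ne']
  have hfn : (n.factorial : ℝ) = a * (Real.sqrt 2 * sn * p) := by
    have := hfact n hn
    rw [Real.sqrt_mul (by norm_num) (n : ℝ)] at this
    rw [this, ← haa, ← hsn, ← hp]
  have e2 : Real.sqrt (2 * ((2 * n : ℕ) : ℝ)) = 2 * sn := by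
    push_cast
    rw [show (2 : ℝ) * (2 * (n : ℝ)) = 2 ^ 2 * (n : ℝ) by ring,
      Real.sqrt_mul (by positivity) (n : ℝ), Real.sqrt_sq (by norm_num)]
  have e3 : (((2 * n : ℕ) : ℝ) / Real.exp 1) ^ (2 * n) = 4 ^ n * p ^ 2 := by
    have h1 : (((2 * n : ℕ) : ℝ) / Real.exp 1) = 2 * ((n : ℝ) / Real.exp 1) := by
      push_cast; ring
    rw [hp, h1, mul_pow, ← pow_mul, show n * 2 = 2 * n from by ring]
    congr 1
    rw [pow_mul]
    norm_num
  have hf2n : ((2 * n).factorial : ℝ) = b * (2 * sn * (4 ^ n * p ^ 2)) := by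
    have := hfact (2 * n) h2n
    rw [show (2 * ((2 * n : ℕ) : ℝ)) = 2 * ((2 * n : ℕ) : ℝ) from rfl] at this
    rw [this, e2, e3, ← hbb]
  have hCfact : C * (n.factorial : ℝ) * (n.factorial : ℝ) = ((2 * n).factorial : ℝ) := by
    have h := Nat.choose_mul_factorial_mul_factorial (show n ≤ 2 * n by omega)
    rw [show 2 * n - n = n from by omega] at h
    rw [hC]
    exact_mod_cast congrArg (fun t : ℕ => (t : ℝ)) h
  have key : C * a ^ 2 * (n : ℝ) = b * 4 ^ n * sn := by
    have h := hCfact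
    rw [hfn, hf2n] at h
    have h2 : Real.sqrt 2 * Real.sqrt 2 = 2 := Real.mul_self_sqrt (by norm_num)
    have h' : C * a ^ 2 * (sn * sn) * (Real.sqrt 2 * Real.sqrt 2) * p ^ 2
        = b * 4 ^ n * sn * 2 * p ^ 2 := by linear_combination h
    rw [hsn2, h2] at h'
    have h'' := mul_right_cancel₀ (pow_ne_zero 2 hppos.ne') h'
    exact mul_right_cancel₀ two_ne_zero h''
  have hsp : Real.sqrt (π * (n : ℝ)) = Real.sqrt π * sn := Real.sqrt_mul pi_pos.le _
  constructor
  · -- lower bound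
    rw [hsp, div_mul_eq_mul_div, div_le_iff₀ (by positivity)]
    rw [← mul_le_mul_iff_of_pos_right (show (0 : ℝ) < a ^ 2 * (n : ℝ) by positivity)]
    calc (4 : ℝ) ^ n * (1 - 1 / (6 * (n : ℝ))) * (a ^ 2 * (n : ℝ))
        = ((1 - 1 / (6 * (n : ℝ))) * a ^ 2) * (4 ^ n * (n : ℝ)) := by ring
      _ ≤ (Real.sqrt π * b) * (4 ^ n * (n : ℝ)) :=
          mul_le_mul_of_nonneg_right hlow (by positivity)
      _ = C * (Real.sqrt π * sn) * (a ^ 2 * (n : ℝ)) := by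
          rw [show C * (Real.sqrt π * sn) * (a ^ 2 * (n : ℝ))
              = C * a ^ 2 * (n : ℝ) * (Real.sqrt π * sn) from by ring, key]
          linear_combination (-(Real.sqrt π * b * 4 ^ n)) * hsn2
  · -- upper bound
    rw [hsp, le_div_iff₀ (by positivity)]
    rw [← mul_le_mul_iff_of_pos_right (show (0 : ℝ) < a ^ 2 * (n : ℝ) by positivity)]
    calc C * (Real.sqrt π * sn) * (a ^ 2 * (n : ℝ))
        = (Real.sqrt π * b) * (4 ^ n * (n : ℝ)) := by
          rw [show C * (Real.sqrt π * sn) * (a ^ 2 * (n : ℝ))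
              = C * a ^ 2 * (n : ℝ) * (Real.sqrt π * sn) from by ring, key]
          linear_combination (Real.sqrt π * b * 4 ^ n) * hsn2
      _ ≤ a ^ 2 * (4 ^ n * (n : ℝ)) := mul_le_mul_of_nonneg_right hup (by positivity)
      _ = 4 ^ n * (a ^ 2 * (n : ℝ)) := by ring
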